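/- Let σ ≠ 0 and define the quadratic logarithmic intensity profile f(u) = −u²/(2σ²). Let x : ℝ → ℝ be twice continuously differentiable with |x'(s)| ≤ v_max and |x''(s)| ≤ a_max for all s, let f_x, Z, C > 0 be constants, set μ(s) = −(f_x/Z)·x(s), and let K ⊂ ℤ² be a finite set of N_u·N_v pixels with Σ_{(u,v)∈K} u = 0 and |u| ≤ N_u/2 for every (u,v) ∈ K. Suppose |f'(w)| ≤ F₁ and |f''(w)| ≤ F₂ for all w in an interval containing u + μ(s) for every (u,v) ∈ K and every s ∈ [t, t+Δt]. Define N_net = (1/C)·Σ_{(u,v)∈K} [f(u + μ(t+Δt)) − f(u + μ(t))] and M_Quadratic = −(N_u N_v f_x²/(C Z² σ²))·x(t)·x'(t). Then for every Δt > 0, |N_net − M_Quadratic·Δt| ≤ L_time·Δt², where L_time = (N_u N_v/(2C))·[F₂·(f_x·v_max/Z)² + F₁·(f_x·a_max/Z)]; that is, the spatial error term vanishes entirely and the net event count estimates the position–velocity product x(t)·x'(t) up to a purely temporal error of order Δt². -/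

import Mathlib

open Real Finset

private lemma hasDerivAt_quad (σ c u : ℝ) {x : ℝ → ℝ} {x' : ℝ} {s : ℝ} (hσ : σ ≠ 0)
    (hx : HasDerivAt x x' s) :
    HasDerivAt (fun r => -((u + c * x r) ^ 2 / (2 * σ ^ 2)))
      (-((u + c * x s) * (c * x') / σ ^ 2)) s := by
  have h : HasDerivAt (fun r => u + c * x r) (c * x') s := (hx.const_mul c).const_add u
  have h2 : HasDerivAt (fun r => -((u + c * x r) ^ 2 / (2 * σ ^ 2)))
      (-(((2 : ℕ) : ℝ) * (u + c * x s) ^ (2 - 1) * (c * x') / (2 * σ ^ 2))) s :=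
    ((h.pow 2).div_const (2 * σ ^ 2)).neg
  convert h2 using 1
  field_simp
  ring

private lemma quad_abs_bound {P Q R s2 F₁ F₂ fv fa : ℝ} (hs2 : 0 < s2)
    (h1 : 1 / s2 ≤ F₂) (h2 : |Q| / s2 ≤ F₁) (hP : |P| ≤ fv) (hR : |R| ≤ fa) :
    |(-((P * P + Q * R) / s2))| ≤ F₂ * fv ^ 2 + F₁ * fa := by
  have hfv : 0 ≤ fv := (abs_nonneg P).trans hP
  have hfa : 0 ≤ fa := (abs_nonneg R).trans hR
  have hF1 : 0 ≤ F₁ := le_trans (div_nonneg (abs_nonneg Q) hs2.le) h2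
  calc |(-((P * P + Q * R) / s2))| = |P * P + Q * R| / s2 := by
        rw [abs_neg, abs_div, abs_of_pos hs2]
    _ ≤ (|P * P| + |Q * R|) / s2 := by gcongr; exact abs_add_le _ _
    _ = |P| * |P| * (1 / s2) + (|Q| / s2) * |R| := by rw [abs_mul, abs_mul]; ring
    _ ≤ fv * fv * F₂ + F₁ * fa := by
        refine add_le_add ?_ (mul_le_mul h2 hR (abs_nonneg _) hF1)
        refine mul_le_mul ?_ h1 (by positivity) (by positivity)
        exact mul_le_mul hP hP (abs_nonneg _) hfv
    _ = F₂ * fv ^ 2 + F₁ * fa := by ring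

private lemma taylor1_bound {g : ℝ → ℝ} (hg : ContDiff ℝ 2 g) {t b B : ℝ} (htb : t < b)
    (hB : ∀ s ∈ Set.Icc t b, |deriv (deriv g) s| ≤ B) :
    |g b - g t - deriv g t * (b - t)| ≤ B * (b - t) ^ 2 / 2 := by
  have hud : UniqueDiffOn ℝ (Set.Icc t b) := uniqueDiffOn_Icc htb
  have hg' : Differentiable ℝ g := hg.differentiable two_ne_zero
  have hg2 : ContDiff ℝ 1 (deriv g) := by
    have h11 : ContDiff ℝ (1 + 1) g := by
      have : ((1 : WithTop ℕ∞) + 1) = 2 := by norm_num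
      rw [this]; exact hg
    exact (contDiff_succ_iff_deriv.mp h11).2.2
  have hg'' : Differentiable ℝ (deriv g) := hg2.differentiable one_ne_zero
  have hd1 : ∀ y ∈ Set.Icc t b, iteratedDerivWithin 1 g (Set.Icc t b) y = deriv g y := by
    intro y hy
    rw [iteratedDerivWithin_one]
    exact (hg' y).derivWithin (hud y hy)
  obtain ⟨c, hc, hTay⟩ := taylor_mean_remainder_lagrange (n := 1) htb.ne
    (by rw [Set.uIcc_of_le htb.le]; exact hg.contDiffOn.of_le (by norm_num))
    (by
      rw [Set.uIcc_of_le htb.le, Set.uIoo_of_le htb.le]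
      apply hg''.differentiableOn.congr
      intro y hy
      exact hd1 y (Set.Ioo_subset_Icc_self hy))
  rw [Set.uIoo_of_le htb.le] at hc
  rw [Set.uIcc_of_le htb.le] at hTay
  have hcmem : c ∈ Set.Icc t b := Set.Ioo_subset_Icc_self hc
  have hTayEval : taylorWithinEval g 1 (Set.Icc t b) t b = g t + deriv g t * (b - t) := by
    rw [taylor_within_apply]
    simp [Finset.sum_range_succ, hd1 t (Set.left_mem_Icc.mpr htb.le)]
    ring
  have h2c : iteratedDerivWithin 2 g (Set.Icc t b) c = deriv (deriv g) c := by
    rw [show (2 : ℕ) = 1 + 1 from rfl, iteratedDerivWithin_succ]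
    rw [derivWithin_congr hd1 (hd1 c hcmem)]
    exact (hg'' c).derivWithin (hud c hcmem)
  have key : g b - g t - deriv g t * (b - t) = deriv (deriv g) c * (b - t) ^ 2 / 2 := by
    rw [hTayEval, h2c] at hTay
    norm_num [Nat.factorial] at hTay
    linarith [hTay]
  rw [key, abs_div, abs_mul, abs_pow, sq_abs, abs_of_pos (by norm_num : (0:ℝ) < 2)]
  gcongr
  exact hB c hcmem

theorem net_event_count_quadratic_profile
    (σ : ℝ) (hσ : σ ≠ 0)
    (f : ℝ → ℝ) (hf : ∀ u : ℝ, f u = -(u ^ 2 / (2 * σ ^ 2)))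
    (x : ℝ → ℝ) (hx : ContDiff ℝ 2 x)
    (v_max a_max : ℝ)
    (hv : ∀ s : ℝ, |deriv x s| ≤ v_max)
    (ha : ∀ s : ℝ, |deriv (deriv x) s| ≤ a_max)
    (f_x Z C : ℝ) (hfx : 0 < f_x) (hZ : 0 < Z) (hC : 0 < C)
    (μ : ℝ → ℝ) (hμ : ∀ s : ℝ, μ s = -(f_x / Z) * x s)
    (N_u N_v : ℕ) (K : Finset (ℤ × ℤ)) (hcard : K.card = N_u * N_v)
    (hsum : ∑ p ∈ K, (p.1 : ℝ) = 0)
    (hpix : ∀ p ∈ K, |(p.1 : ℝ)| ≤ (N_u : ℝ) / 2)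
    (t Δt : ℝ) (hΔt : 0 < Δt)
    (I : Set ℝ) (hI : Convex ℝ I)
    (hmem : ∀ p ∈ K, ∀ s ∈ Set.Icc t (t + Δt), ((p.1 : ℝ) + μ s) ∈ I)
    (F₁ F₂ : ℝ)
    (hF₁ : ∀ w ∈ I, |deriv f w| ≤ F₁)
    (hF₂ : ∀ w ∈ I, |deriv (deriv f) w| ≤ F₂)
    (N_net M_Quadratic L_time : ℝ)
    (hN : N_net = (1 / C) * ∑ p ∈ K, (f ((p.1 : ℝ) + μ (t + Δt)) - f ((p.1 : ℝ) + μ t)))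
    (hM : M_Quadratic = -((N_u : ℝ) * (N_v : ℝ) * f_x ^ 2 / (C * Z ^ 2 * σ ^ 2)) *
      x t * deriv x t)
    (hLtime : L_time = ((N_u : ℝ) * (N_v : ℝ) / (2 * C)) *
      (F₂ * (f_x * v_max / Z) ^ 2 + F₁ * (f_x * a_max / Z))) :
    |N_net - M_Quadratic * Δt| ≤ L_time * Δt ^ 2 := by
  have hσ2 : (0:ℝ) < σ ^ 2 := by positivity
  set c : ℝ := -(f_x / Z) with hc
  have hμ' : ∀ s, μ s = c * x s := fun s => hμ s
  -- differentiability of x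
  have hx1 : Differentiable ℝ x := hx.differentiable two_ne_zero
  have hx2 : Differentiable ℝ (deriv x) := by
    have h11 : ContDiff ℝ (1 + 1) x := by
      have : ((1 : WithTop ℕ∞) + 1) = 2 := by norm_num
      rw [this]; exact hx
    exact ((contDiff_succ_iff_deriv.mp h11).2.2).differentiable one_ne_zero
  -- per-pixel function
  set G : ℝ → ℝ → ℝ := fun u s => -((u + c * x s) ^ 2 / (2 * σ ^ 2)) with hG
  have hgf : ∀ (u s : ℝ), f (u + μ s) = G u s := by
    intro u s; rw [hf, hμ']
  have hgc : ∀ u : ℝ, ContDiff ℝ 2 (G u) :=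
    fun u => (((contDiff_const.add (contDiff_const.mul hx)).pow 2).div_const _).neg
  have hd1 : ∀ (u s : ℝ), HasDerivAt (G u) (-((u + c * x s) * (c * deriv x s) / σ ^ 2)) s :=
    fun u s => hasDerivAt_quad σ c u hσ (hx1 s).hasDerivAt
  have hderiv1 : ∀ u : ℝ, deriv (G u) = fun s => -((u + c * x s) * (c * deriv x s) / σ ^ 2) :=
    fun u => funext fun s => (hd1 u s).deriv
  have hderiv2 : ∀ (u s : ℝ), deriv (deriv (G u)) s
      = -(((c * deriv x s) * (c * deriv x s) + (u + c * x s) * (c * deriv (deriv x) s)) / σ ^ 2) := by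
    intro u s
    rw [hderiv1 u]
    have hA : HasDerivAt (fun r => u + c * x r) (c * deriv x s) s :=
      ((hx1 s).hasDerivAt.const_mul c).const_add u
    have hB : HasDerivAt (fun r => c * deriv x r) (c * deriv (deriv x) s) s :=
      (hx2 s).hasDerivAt.const_mul c
    exact (((hA.mul hB).div_const (σ ^ 2)).neg).deriv
  -- derivatives of f
  have hfd : deriv f = fun w => -(w / σ ^ 2) := by
    funext w
    have hfe : f = fun u => -(u ^ 2 / (2 * σ ^ 2)) := funext hf
    rw [hfe]
    have h : HasDerivAt (fun u : ℝ => -(u ^ 2 / (2 * σ ^ 2)))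
        (-(((2 : ℕ) : ℝ) * w ^ (2 - 1) / (2 * σ ^ 2))) w :=
      ((hasDerivAt_pow 2 w).div_const (2 * σ ^ 2)).neg
    have h' : HasDerivAt (fun u : ℝ => -(u ^ 2 / (2 * σ ^ 2))) (-(w / σ ^ 2)) w := by
      convert h using 1
      field_simp; ring
    exact h'.deriv
  have hfd2 : deriv (deriv f) = fun _ => -(1 / σ ^ 2) := by
    rw [hfd]; funext w
    have h : HasDerivAt (fun w : ℝ => -(w / σ ^ 2)) (-(1 / σ ^ 2)) w :=
      ((hasDerivAt_id w).div_const (σ ^ 2)).neg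
    exact h.deriv
  -- the total bound
  set B_tot : ℝ := F₂ * (f_x * v_max / Z) ^ 2 + F₁ * (f_x * a_max / Z) with hBtot
  have hvm : 0 ≤ v_max := le_trans (abs_nonneg _) (hv t)
  have ham : 0 ≤ a_max := le_trans (abs_nonneg _) (ha t)
  have habsc : |c| = f_x / Z := by
    rw [hc, abs_neg, abs_of_pos (by positivity)]
  have hbound : ∀ p ∈ K, ∀ s ∈ Set.Icc t (t + Δt), |deriv (deriv (G (p.1 : ℝ))) s| ≤ B_tot := by
    intro p hp s hs
    have hw : ((p.1 : ℝ) + c * x s) ∈ I := by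
      have := hmem p hp s hs; rwa [hμ'] at this
    have h1σ : 1 / σ ^ 2 ≤ F₂ := by
      have := hF₂ _ hw
      rw [hfd2] at this
      rwa [abs_neg, abs_of_nonneg (by positivity)] at this
    have hQ : |(p.1 : ℝ) + c * x s| / σ ^ 2 ≤ F₁ := by
      have := hF₁ _ hw
      rw [hfd] at this
      rwa [abs_neg, abs_div, abs_of_pos hσ2] at this
    have hP : |c * deriv x s| ≤ f_x * v_max / Z := by
      rw [abs_mul, habsc]
      calc f_x / Z * |deriv x s| ≤ f_x / Z * v_max := by
            exact mul_le_mul_of_nonneg_left (hv s) (by positivity)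
        _ = f_x * v_max / Z := by ring
    have hR : |c * deriv (deriv x) s| ≤ f_x * a_max / Z := by
      rw [abs_mul, habsc]
      calc f_x / Z * |deriv (deriv x) s| ≤ f_x / Z * a_max := by
            exact mul_le_mul_of_nonneg_left (ha s) (by positivity)
        _ = f_x * a_max / Z := by ring
    rw [hderiv2]
    rw [hBtot]
    exact quad_abs_bound hσ2 h1σ hQ hP hR
  -- Taylor bound per pixel
  have hTay : ∀ p ∈ K,
      |G (p.1 : ℝ) (t + Δt) - G (p.1 : ℝ) t
        - (-(((p.1 : ℝ) + c * x t) * (c * deriv x t) / σ ^ 2)) * Δt| ≤ B_tot * Δt ^ 2 / 2 := by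
    intro p hp
    have h := taylor1_bound (hgc (p.1 : ℝ)) (by linarith : t < t + Δt) (hbound p hp)
    rw [add_sub_cancel_left] at h
    rw [show deriv (G (p.1 : ℝ)) t = -(((p.1 : ℝ) + c * x t) * (c * deriv x t) / σ ^ 2) from
      (hd1 _ t).deriv] at h
    exact h
  -- sum of first-order terms equals M_Quadratic
  have hDsum : (1 / C) * ∑ p ∈ K, (-(((p.1 : ℝ) + c * x t) * (c * deriv x t) / σ ^ 2))
      = M_Quadratic := by
    rw [hM]
    have hterm : ∀ p ∈ K, -(((p.1 : ℝ) + c * x t) * (c * deriv x t) / σ ^ 2)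
        = (p.1 : ℝ) * (-(c * deriv x t) / σ ^ 2) + (-(c * x t * (c * deriv x t)) / σ ^ 2) := by
      intro p _; ring
    rw [Finset.sum_congr rfl hterm, Finset.sum_add_distrib, ← Finset.sum_mul, hsum,
      Finset.sum_const, hcard, nsmul_eq_mul, hc]
    push_cast
    field_simp
    ring
  -- split the error
  have hsplit : N_net - M_Quadratic * Δt = (1 / C) * ∑ p ∈ K,
      (G (p.1 : ℝ) (t + Δt) - G (p.1 : ℝ) t
        - (-(((p.1 : ℝ) + c * x t) * (c * deriv x t) / σ ^ 2)) * Δt) := by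
    rw [hN, ← hDsum]
    have hfg : ∀ p ∈ K, f ((p.1 : ℝ) + μ (t + Δt)) - f ((p.1 : ℝ) + μ t)
        = G (p.1 : ℝ) (t + Δt) - G (p.1 : ℝ) t := by
      intro p _; rw [hgf, hgf]
    have hsum3 : ∑ p ∈ K, (G (p.1 : ℝ) (t + Δt) - G (p.1 : ℝ) t
        - (-(((p.1 : ℝ) + c * x t) * (c * deriv x t) / σ ^ 2)) * Δt)
        = (∑ p ∈ K, (G (p.1 : ℝ) (t + Δt) - G (p.1 : ℝ) t))
          - (∑ p ∈ K, -(((p.1 : ℝ) + c * x t) * (c * deriv x t) / σ ^ 2)) * Δt := by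
      rw [Finset.sum_sub_distrib, Finset.sum_mul]
    rw [Finset.sum_congr rfl hfg, hsum3]
    ring
  -- final estimate
  rw [hsplit, abs_mul, abs_of_pos (by positivity : (0:ℝ) < 1 / C)]
  calc (1 / C) * |∑ p ∈ K, (G (p.1 : ℝ) (t + Δt) - G (p.1 : ℝ) t
        - (-(((p.1 : ℝ) + c * x t) * (c * deriv x t) / σ ^ 2)) * Δt)|
      ≤ (1 / C) * ∑ p ∈ K, |G (p.1 : ℝ) (t + Δt) - G (p.1 : ℝ) t
        - (-(((p.1 : ℝ) + c * x t) * (c * deriv x t) / σ ^ 2)) * Δt| := by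
        gcongr
        exact Finset.abs_sum_le_sum_abs _ _
    _ ≤ (1 / C) * (K.card • (B_tot * Δt ^ 2 / 2)) := by
        gcongr
        exact Finset.sum_le_card_nsmul K _ _ hTay
    _ = L_time * Δt ^ 2 := by
        rw [hcard, nsmul_eq_mul, hLtime, hBtot]
        push_cast
        ring
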